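/- Let H be an n×s integer matrix and H' an n'×s integer matrix, both Horn matrices (all column sums zero), both minimal (no zero row, and no two distinct rows linearly dependent over ℚ), and let d_1,…,d_s and d'_1,…,d'_s be nonzero complex constants. If the Horn parametrizations coincide, i.e. for every j = 1,…,s the equality d_j·∏_{k=1}^n ℓ_k^{b_{kj}} = d'_j·∏_{k=1}^{n'} (ℓ'_k)^{b'_{kj}} holds in the field ℂ(u_1,…,u_s) of rational functions (where ℓ_k = Σ_j b_{kj} u_j and ℓ'_k = Σ_j b'_{kj} u_j), then n = n', d_j = d'_j for all j, and there is a bijection σ : {1,…,n} → {1,…,n'} such that b'_{σ(k)j} = b_{kj} for all k, j. In other words, a Horn parametrization is given by a minimal Horn matrix that is unique up to permutation of its rows. -/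

import Mathlib

open Finset

noncomputable section

/-- The field `ℂ(u_1,…,u_s)` of rational functions in `s` variables. -/
abbrev RatFunField (s : ℕ) := FractionRing (MvPolynomial (Fin s) ℂ)

/-- The linear form `ℓ = ∑_j v_j u_j` viewed in `ℂ(u_1,…,u_s)`. -/
def linForm {s : ℕ} (v : Fin s → ℤ) : RatFunField s :=
  algebraMap (MvPolynomial (Fin s) ℂ) (RatFunField s)
    (∑ j, MvPolynomial.C ((v j : ℂ)) * MvPolynomial.X j)

/-- The `j`-th component `G_j = d_j ∏_k ℓ_k^{b_{kj}}` of the Horn parametrization of the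
Horn matrix `B` with constants `dd`. -/
def hornComponent {n s : ℕ} (B : Matrix (Fin n) (Fin s) ℤ) (dd : Fin s → ℂ) (j : Fin s) :
    RatFunField s :=
  algebraMap (MvPolynomial (Fin s) ℂ) (RatFunField s) (MvPolynomial.C (dd j)) *
    ∏ k, linForm (B k) ^ (B k j)

/-- `B` is a Horn matrix: every column sums to zero. -/
def IsHornMatrix {n s : ℕ} (B : Matrix (Fin n) (Fin s) ℤ) : Prop :=
  ∀ j, ∑ k, B k j = 0

/-- `B` is minimal: no zero row, and no two distinct rows are linearly dependent (one a
rational multiple of the other). -/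
def IsMinimalHorn {n s : ℕ} (B : Matrix (Fin n) (Fin s) ℤ) : Prop :=
  (∀ k, B k ≠ 0) ∧
  ∀ k k' : Fin n, k ≠ k' →
    ¬ ((∃ q : ℚ, ∀ j, (B k' j : ℚ) = q * (B k j : ℚ)) ∨
       (∃ q : ℚ, ∀ j, (B k j : ℚ) = q * (B k' j : ℚ)))

namespace HornAux

open MvPolynomial

attribute [local instance] Classical.propDecidable

def linPoly {s : ℕ} (v : Fin s → ℤ) : MvPolynomial (Fin s) ℂ :=
  ∑ j, C ((v j : ℂ)) * X j

lemma linForm_eq {s : ℕ} (v : Fin s → ℤ) :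
    linForm v = algebraMap (MvPolynomial (Fin s) ℂ) (RatFunField s) (linPoly v) := rfl

lemma eval_linPoly {s : ℕ} (v : Fin s → ℤ) (x : Fin s → ℂ) :
    eval x (linPoly v) = ∑ j, (v j : ℂ) * x j := by
  simp [linPoly]

lemma linPoly_ne_zero {s : ℕ} {v : Fin s → ℤ} (hv : v ≠ 0) : linPoly v ≠ 0 := by
  intro h
  apply hv; funext j
  have h2 := congrArg (eval (Pi.single j 1)) h
  rw [eval_linPoly] at h2
  simp [Pi.single_apply] at h2
  exact_mod_cast h2

lemma prop_of_dvd {s : ℕ} {v w : Fin s → ℤ} (hv : v ≠ 0) (h : linPoly v ∣ linPoly w) :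
    ∃ q : ℚ, ∀ j, (w j : ℚ) = q * (v j : ℚ) := by
  obtain ⟨j0, hj0⟩ : ∃ j0, v j0 ≠ 0 := by
    by_contra h'; push_neg at h'; exact hv (funext h')
  have hj0Q : (v j0 : ℚ) ≠ 0 := Int.cast_ne_zero.mpr hj0
  refine ⟨(w j0 : ℚ) / (v j0 : ℚ), fun j => ?_⟩
  rcases eq_or_ne j j0 with rfl | hj
  · field_simp
  · obtain ⟨g, hg⟩ := h
    set x : Fin s → ℂ := fun j' => if j' = j then (v j0 : ℂ) else if j' = j0 then -(v j : ℂ) else 0 with hx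
    have key : ∀ u : Fin s → ℤ, eval x (linPoly u)
        = (u j : ℂ) * (v j0 : ℂ) - (u j0 : ℂ) * (v j : ℂ) := by
      intro u
      rw [eval_linPoly]
      have : ∀ j', (u j' : ℂ) * x j' =
          (if j' = j then (u j : ℂ) * (v j0 : ℂ) else 0)
          + (if j' = j0 then -((u j0 : ℂ) * (v j : ℂ)) else 0) := by
        intro j'
        rcases eq_or_ne j' j with rfl | h1
        · simp [hx, hj]
        · rcases eq_or_ne j' j0 with rfl | h2
          · simp [hx, h1, Ne.symm hj]
          · simp [hx, h1, h2]
      rw [Finset.sum_congr rfl fun j' _ => this j', Finset.sum_add_distrib]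
      simp
      ring
    have h0 : eval x (linPoly v) = 0 := by rw [key]; ring
    have hw : eval x (linPoly w) = 0 := by
      rw [hg, map_mul, h0, zero_mul]
    rw [key] at hw
    have hZ : w j * v j0 = w j0 * v j := by
      have : ((w j * v j0 : ℤ) : ℂ) = ((w j0 * v j : ℤ) : ℂ) := by
        push_cast
        linear_combination hw
      exact_mod_cast this
    rw [div_mul_eq_mul_div, eq_div_iff hj0Q]
    exact_mod_cast hZ

lemma prime_X {s : ℕ} (j : Fin s) : Prime (X j : MvPolynomial (Fin s) ℂ) := by
  cases s with
  | zero => exact absurd j.2 (by omega)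
  | succ m =>
    have h0 : Prime (X (0 : Fin (m + 1)) : MvPolynomial (Fin (m + 1)) ℂ) := by
      rw [← MulEquiv.prime_iff (finSuccEquiv ℂ m).toMulEquiv]
      simpa [finSuccEquiv_X_zero] using Polynomial.prime_X
        (R := MvPolynomial (Fin m) ℂ)
    have := MulEquiv.prime_iff (renameEquiv ℂ (Equiv.swap j 0)).toMulEquiv
      (p := (X (0 : Fin (m+1)) : MvPolynomial (Fin (m + 1)) ℂ))
    rw [← this] at h0
    simpa [renameEquiv_apply, rename_X, Equiv.swap_apply_right] using h0

lemma prime_linPoly {s : ℕ} {v : Fin s → ℤ} (hv : v ≠ 0) : Prime (linPoly v) := by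
  obtain ⟨j0, hj0⟩ : ∃ j0, v j0 ≠ 0 := by
    by_contra h'; push_neg at h'; exact hv (funext h')
  set c : ℂ := (v j0 : ℂ) with hc
  have hc0 : c ≠ 0 := Int.cast_ne_zero.mpr hj0
  set Sr : MvPolynomial (Fin s) ℂ := ∑ j ∈ Finset.univ.erase j0, C ((v j : ℂ)) * X j with hSr
  have hsplit : linPoly v = C c * X j0 + Sr := by
    rw [linPoly, ← Finset.add_sum_erase _ _ (Finset.mem_univ j0)]
  set f : Fin s → MvPolynomial (Fin s) ℂ :=
    fun j => if j = j0 then C c⁻¹ * (X j0 - Sr) else X j with hf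
  set g : Fin s → MvPolynomial (Fin s) ℂ :=
    fun j => if j = j0 then linPoly v else X j with hg
  have hfS : aeval f Sr = Sr := by
    rw [hSr, map_sum]
    refine Finset.sum_congr rfl fun j hj => ?_
    have hne : j ≠ j0 := (Finset.mem_erase.mp hj).1
    simp [hf, hne, algebraMap_eq]
  have hgS : aeval g Sr = Sr := by
    rw [hSr, map_sum]
    refine Finset.sum_congr rfl fun j hj => ?_
    have hne : j ≠ j0 := (Finset.mem_erase.mp hj).1
    simp [hg, hne, algebraMap_eq]
  have h1 : ∀ j, aeval f (g j) = X j := by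
    intro j
    rcases eq_or_ne j j0 with rfl | hne
    · simp only [hg, if_pos rfl, hsplit, map_add, map_mul, aeval_C, aeval_X, algebraMap_eq, hfS]
      rw [hf]
      simp only [if_pos rfl, if_true]
      rw [← mul_assoc, ← C_mul, mul_inv_cancel₀ hc0, C_1, one_mul]
      ring
    · simp [hf, hg, hne]
  have h2 : ∀ j, aeval g (f j) = X j := by
    intro j
    rcases eq_or_ne j j0 with rfl | hne
    · simp only [hf, if_pos rfl, map_mul, map_sub, aeval_C, aeval_X, algebraMap_eq, hgS]
      rw [hg]
      simp only [if_pos rfl, if_true, hsplit]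
      rw [add_sub_cancel_right, ← mul_assoc, ← C_mul, inv_mul_cancel₀ hc0, C_1, one_mul]
    · simp [hf, hg, hne]
  let e : MvPolynomial (Fin s) ℂ ≃ₐ[ℂ] MvPolynomial (Fin s) ℂ :=
    AlgEquiv.ofAlgHom (aeval g) (aeval f)
      (by apply algHom_ext; intro j; simpa using h2 j)
      (by apply algHom_ext; intro j; simpa using h1 j)
  have he : e (X j0) = linPoly v := by
    show aeval g (X j0) = linPoly v
    simp [hg]
  have := (MulEquiv.prime_iff e.toMulEquiv (p := (X j0 : MvPolynomial (Fin s) ℂ))).mpr (prime_X j0)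
  rwa [show e.toMulEquiv (X j0) = e (X j0) from rfl, he] at this

lemma emult_prime_pow {α : Type*} [CommMonoidWithZero α] [IsCancelMulZero α] {p q : α}
    (hp : Prime p) (hq : Prime q) (m : ℕ) :
    emultiplicity p (q ^ m) = if Associated p q then (m : ℕ∞) else 0 := by
  rw [emultiplicity_pow hp]
  split_ifs with h
  · rw [emultiplicity_eq_of_associated_right h.symm]
    have h1 := emultiplicity_pow_self_of_prime hp 1
    rw [pow_one] at h1
    rw [h1]
    simp
  · rw [emultiplicity_eq_zero.mpr fun hdvd => h (hp.associated_of_dvd hq hdvd), mul_zero]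

lemma emult_C {s : ℕ} {p : MvPolynomial (Fin s) ℂ} (hp : Prime p) {d : ℂ} (hd : d ≠ 0) :
    emultiplicity p (C d) = 0 :=
  emultiplicity_eq_zero.mpr fun hdvd =>
    hp.not_unit (isUnit_of_dvd_unit hdvd (hd.isUnit.map C))

lemma key_count {n n' s : ℕ} (L : Fin n → MvPolynomial (Fin s) ℂ)
    (L' : Fin n' → MvPolynomial (Fin s) ℂ)
    (hL : ∀ k, Prime (L k)) (hL' : ∀ k, Prime (L' k))
    {d d' : ℂ} (hd : d ≠ 0) (hd' : d' ≠ 0) (a b : Fin n → ℕ) (a' b' : Fin n' → ℕ)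
    (E : C d * ((∏ k, L k ^ a k) * ∏ k', L' k' ^ b' k')
       = C d' * ((∏ k', L' k' ^ a' k') * ∏ k, L k ^ b k))
    (p : MvPolynomial (Fin s) ℂ) (hp : Prime p) :
    ((∑ k, if Associated p (L k) then (a k : ℕ∞) else 0)
      + ∑ k', if Associated p (L' k') then (b' k' : ℕ∞) else 0)
    = (∑ k', if Associated p (L' k') then (a' k' : ℕ∞) else 0)
      + ∑ k, if Associated p (L k) then (b k : ℕ∞) else 0 := by
  have hE := congrArg (emultiplicity p) E
  rw [emultiplicity_mul hp, emultiplicity_mul hp, emultiplicity_mul hp, emultiplicity_mul hp,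
    emult_C hp hd, emult_C hp hd', zero_add, zero_add,
    Finset.emultiplicity_prod hp, Finset.emultiplicity_prod hp,
    Finset.emultiplicity_prod hp, Finset.emultiplicity_prod hp] at hE
  calc _ = (∑ k, emultiplicity p (L k ^ a k)) + ∑ k', emultiplicity p (L' k' ^ b' k') := by
        rw [Finset.sum_congr rfl fun k _ => (emult_prime_pow hp (hL k) (a k)).symm,
          Finset.sum_congr rfl fun k' _ => (emult_prime_pow hp (hL' k') (b' k')).symm]
    _ = (∑ k', emultiplicity p (L' k' ^ a' k')) + ∑ k, emultiplicity p (L k ^ b k) := hE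
    _ = _ := by
        rw [Finset.sum_congr rfl fun k' _ => emult_prime_pow hp (hL' k') (a' k'),
          Finset.sum_congr rfl fun k _ => emult_prime_pow hp (hL k) (b k)]

lemma zpow_mul_pow_neg {K : Type*} [Field K] {x : K} (hx : x ≠ 0) (m : ℤ) :
    x ^ m * x ^ (-m).toNat = x ^ m.toNat := by
  rw [← zpow_natCast x (-m).toNat, ← zpow_natCast x m.toNat, ← zpow_add₀ hx]
  congr 1
  omega

lemma prod_zpow_eq {K : Type*} [Field K] {n : ℕ} (x : Fin n → K) (hx : ∀ k, x k ≠ 0)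
    (m : Fin n → ℤ) :
    (∏ k, x k ^ m k) * ∏ k, x k ^ ((-(m k)).toNat) = ∏ k, x k ^ (m k).toNat := by
  rw [← Finset.prod_mul_distrib]
  exact Finset.prod_congr rfl fun k _ => zpow_mul_pow_neg (hx k) (m k)

end HornAux

open HornAux MvPolynomial in
/-- Two minimal Horn matrices (with nonzero constants) giving the same Horn
parametrization have the same number of rows, the same constants, and agree up to a
permutation of the rows: a Horn parametrization determines an essentially unique minimal
Horn matrix. -/
theorem minimal_horn_matrix_unique {n n' s : ℕ}
    (B : Matrix (Fin n) (Fin s) ℤ) (B' : Matrix (Fin n') (Fin s) ℤ)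
    (hB : IsHornMatrix B) (hB' : IsHornMatrix B')
    (hBmin : IsMinimalHorn B) (hB'min : IsMinimalHorn B')
    (dd dd' : Fin s → ℂ) (hd : ∀ j, dd j ≠ 0) (hd' : ∀ j, dd' j ≠ 0)
    (heq : ∀ j, hornComponent B dd j = hornComponent B' dd' j) :
    n = n' ∧ (∀ j, dd j = dd' j) ∧
      ∃ σ : Fin n ≃ Fin n', ∀ k j, B' (σ k) j = B k j := by
  classical
  have hinj : Function.Injective
      (algebraMap (MvPolynomial (Fin s) ℂ) (RatFunField s)) :=
    IsFractionRing.injective _ _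
  have hrow : ∀ k, B k ≠ 0 := hBmin.1
  have hrow' : ∀ k, B' k ≠ 0 := hB'min.1
  have hprime : ∀ k, Prime (linPoly (B k)) := fun k => prime_linPoly (hrow k)
  have hprime' : ∀ k, Prime (linPoly (B' k)) := fun k => prime_linPoly (hrow' k)
  have hLnz : ∀ k, linForm (B k) ≠ 0 := by
    intro k
    rw [linForm_eq]
    exact (map_ne_zero_iff _ hinj).mpr (linPoly_ne_zero (hrow k))
  have hLnz' : ∀ k, linForm (B' k) ≠ 0 := by
    intro k
    rw [linForm_eq]
    exact (map_ne_zero_iff _ hinj).mpr (linPoly_ne_zero (hrow' k))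
  -- the polynomial identity obtained by clearing denominators
  have E : ∀ j, C (dd j) * ((∏ k, linPoly (B k) ^ (B k j).toNat) *
        ∏ k', linPoly (B' k') ^ ((-(B' k' j)).toNat)) =
      C (dd' j) * ((∏ k', linPoly (B' k') ^ (B' k' j).toNat) *
        ∏ k, linPoly (B k) ^ ((-(B k j)).toNat)) := by
    intro j
    apply hinj
    have h := heq j
    unfold hornComponent at h
    simp only [map_mul, map_prod, map_pow]
    simp only [← linForm_eq]
    calc (algebraMap (MvPolynomial (Fin s) ℂ) (RatFunField s)) (C (dd j))
          * ((∏ k, linForm (B k) ^ (B k j).toNat)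
            * ∏ k', linForm (B' k') ^ ((-(B' k' j)).toNat))
        = ((algebraMap (MvPolynomial (Fin s) ℂ) (RatFunField s)) (C (dd j))
            * ∏ k, linForm (B k) ^ (B k j))
          * ((∏ k, linForm (B k) ^ ((-(B k j)).toNat))
            * ∏ k', linForm (B' k') ^ ((-(B' k' j)).toNat)) := by
          rw [← prod_zpow_eq (fun k => linForm (B k)) hLnz (fun k => B k j)]; ring
      _ = ((algebraMap (MvPolynomial (Fin s) ℂ) (RatFunField s)) (C (dd' j))
            * ∏ k', linForm (B' k') ^ (B' k' j))
          * ((∏ k, linForm (B k) ^ ((-(B k j)).toNat))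
            * ∏ k', linForm (B' k') ^ ((-(B' k' j)).toNat)) := by rw [h]
      _ = _ := by
          rw [← prod_zpow_eq (fun k' => linForm (B' k')) hLnz' (fun k' => B' k' j)]; ring
  have count : ∀ (j : Fin s) (p : MvPolynomial (Fin s) ℂ), Prime p →
      ((∑ k, if Associated p (linPoly (B k)) then (((B k j).toNat : ℕ∞)) else 0)
        + ∑ k', if Associated p (linPoly (B' k')) then ((((-(B' k' j)).toNat : ℕ∞))) else 0)
      = (∑ k', if Associated p (linPoly (B' k')) then (((B' k' j).toNat : ℕ∞)) else 0)
        + ∑ k, if Associated p (linPoly (B k)) then ((((-(B k j)).toNat : ℕ∞))) else 0 :=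
    fun j p hp => key_count (fun k => linPoly (B k)) (fun k' => linPoly (B' k'))
      hprime hprime' (hd j) (hd' j) _ _ _ _ (E j) p hp
  -- two rows of the same matrix with associated linear forms coincide
  have assocB : ∀ k1 k2 : Fin n,
      Associated (linPoly (B k1)) (linPoly (B k2)) → k1 = k2 := by
    intro k1 k2 hA
    by_contra hne
    exact hBmin.2 k1 k2 hne (Or.inl (prop_of_dvd (hrow k1) hA.dvd))
  have assocB' : ∀ k1 k2 : Fin n',
      Associated (linPoly (B' k1)) (linPoly (B' k2)) → k1 = k2 := by
    intro k1 k2 hA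
    by_contra hne
    exact hB'min.2 k1 k2 hne (Or.inl (prop_of_dvd (hrow' k1) hA.dvd))
  -- collapsing the indicator sums
  have sumB : ∀ (p : MvPolynomial (Fin s) ℂ) (k0 : Fin n),
      Associated p (linPoly (B k0)) → ∀ c : Fin n → ℕ∞,
      (∑ k, if Associated p (linPoly (B k)) then c k else 0) = c k0 := by
    intro p k0 hA c
    rw [Finset.sum_eq_single k0]
    · rw [if_pos hA]
    · intro k1 _ hne
      rw [if_neg]
      intro hA1
      exact hne (assocB _ _ (hA.symm.trans hA1)).symm
    · intro hk; exact absurd (Finset.mem_univ k0) hk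
  have sumB' : ∀ (p : MvPolynomial (Fin s) ℂ) (k0 : Fin n'),
      Associated p (linPoly (B' k0)) → ∀ c : Fin n' → ℕ∞,
      (∑ k, if Associated p (linPoly (B' k)) then c k else 0) = c k0 := by
    intro p k0 hA c
    rw [Finset.sum_eq_single k0]
    · rw [if_pos hA]
    · intro k1 _ hne
      rw [if_neg]
      intro hA1
      exact hne (assocB' _ _ (hA.symm.trans hA1)).symm
    · intro hk; exact absurd (Finset.mem_univ k0) hk
  have sumB0 : ∀ (p : MvPolynomial (Fin s) ℂ),
      (∀ k, ¬ Associated p (linPoly (B k))) → ∀ c : Fin n → ℕ∞,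
      (∑ k, if Associated p (linPoly (B k)) then c k else 0) = 0 := by
    intro p hno c
    exact Finset.sum_eq_zero fun k _ => if_neg (hno k)
  have sumB'0 : ∀ (p : MvPolynomial (Fin s) ℂ),
      (∀ k, ¬ Associated p (linPoly (B' k))) → ∀ c : Fin n' → ℕ∞,
      (∑ k, if Associated p (linPoly (B' k)) then c k else 0) = 0 := by
    intro p hno c
    exact Finset.sum_eq_zero fun k _ => if_neg (hno k)
  -- every row of B matches a row of B'
  have matchex : ∀ k, ∃ k', Associated (linPoly (B k)) (linPoly (B' k')) := by
    intro k
    by_contra hno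
    push_neg at hno
    apply hrow k
    funext j
    have h := count j (linPoly (B k)) (hprime k)
    rw [sumB _ k (Associated.refl _) _, sumB _ k (Associated.refl _) _,
      sumB'0 _ hno _, sumB'0 _ hno _, add_zero, zero_add] at h
    have h2 : (B k j).toNat = (-(B k j)).toNat := by exact_mod_cast h
    show B k j = 0
    omega
  -- every row of B' matches a row of B
  have revex : ∀ k', ∃ k, Associated (linPoly (B k)) (linPoly (B' k')) := by
    intro k'
    by_contra hno
    push_neg at hno
    apply hrow' k'
    funext j
    have h := count j (linPoly (B' k')) (hprime' k')
    rw [sumB' _ k' (Associated.refl _) _, sumB' _ k' (Associated.refl _) _,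
      sumB0 _ (fun k hA => hno k hA.symm) _, sumB0 _ (fun k hA => hno k hA.symm) _,
      add_zero, zero_add] at h
    have h2 : (-(B' k' j)).toNat = (B' k' j).toNat := by exact_mod_cast h
    show B' k' j = 0
    omega
  -- matched rows are equal
  have matchval : ∀ k k', Associated (linPoly (B k)) (linPoly (B' k')) →
      ∀ j, B' k' j = B k j := by
    intro k k' hA j
    have h := count j (linPoly (B k)) (hprime k)
    rw [sumB _ k (Associated.refl _) _, sumB _ k (Associated.refl _) _,
      sumB' _ k' hA _, sumB' _ k' hA _] at h
    have h2 : (B k j).toNat + (-(B' k' j)).toNat = (B' k' j).toNat + (-(B k j)).toNat := by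
      exact_mod_cast h
    omega
  choose F hF using matchex
  have hFbij : Function.Bijective F := by
    constructor
    · intro k1 k2 hFk
      exact assocB k1 k2 ((hF k1).trans (by rw [hFk]; exact (hF k2).symm))
    · intro k'
      obtain ⟨k, hk⟩ := revex k'
      exact ⟨k, assocB' _ _ ((hF k).symm.trans hk)⟩
  let σ : Fin n ≃ Fin n' := Equiv.ofBijective F hFbij
  have hσ : ∀ k j, B' (σ k) j = B k j := fun k j => matchval k (F k) (hF k) j
  have hnn' : n = n' := by
    have := Fintype.card_congr σ
    simpa using this
  refine ⟨hnn', ?_, ⟨σ, hσ⟩⟩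
  intro j
  have hPeq : (∏ k', linForm (B' k') ^ (B' k' j)) = ∏ k, linForm (B k) ^ (B k j) := by
    rw [← Equiv.prod_comp σ (fun k' => linForm (B' k') ^ (B' k' j))]
    refine Finset.prod_congr rfl fun k _ => ?_
    have hrowk : B' (σ k) = B k := funext fun j => hσ k j
    simp only [hrowk]
  have h := heq j
  unfold hornComponent at h
  rw [hPeq] at h
  have hPne : (∏ k, linForm (B k) ^ (B k j)) ≠ 0 :=
    Finset.prod_ne_zero_iff.mpr fun k _ => zpow_ne_zero _ (hLnz k)
  have h2 := mul_right_cancel₀ hPne h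
  have h3 := hinj h2
  simpa using h3
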